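/- Let 1 ≤ s < r and let J₁, …, Jₙ ⊆ {1, …, r} be subsets of size s, with Jᵢ = {j_{i,1} < … < j_{i,s}}. Assume the transversality hypothesis: for every choice of partial flags F_{i,1} ⊂ … ⊂ F_{i,s} of complex subspaces of ℂʳ with dim F_{i,l} = j_{i,l} (for i = 1, …, n), there exists an s-dimensional complex subspace E ⊆ ℂʳ with dim(E ∩ F_{i,l}) ≥ l for all i = 1, …, n and l = 1, …, s. Then for any r×r complex Hermitian matrices H₁, …, Hₙ with H₁ + ⋯ + Hₙ = 0, one has Σ_{i=1}^{n} Σ_{j ∈ Jᵢ} λⱼ(Hᵢ) ≤ 0. -/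

import Mathlib

set_option linter.unusedVariables false
set_option linter.unusedSectionVars false

open Module Submodule Finset

noncomputable section HornAux

variable {V : Type*} [NormedAddCommGroup V] [InnerProductSpace ℂ V] [FiniteDimensional ℂ V]

local notation "⟪" x ", " y "⟫" => @inner ℂ _ _ x y

lemma horn_exists_orthonormal_chain (G : ℕ → Submodule ℂ V) (m : ℕ)
    (hG : ∀ l < m, l + 1 ≤ finrank ℂ (G l)) :
    ∃ v : Fin m → V, Orthonormal ℂ v ∧ ∀ l : Fin m, v l ∈ G (l : ℕ) := by
  induction m with
  | zero =>
    refine ⟨fun l => l.elim0, ?_, fun l => l.elim0⟩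
    rw [orthonormal_iff_ite]
    exact fun a => a.elim0
  | succ m ih =>
    obtain ⟨v, hv, hvG⟩ := ih (fun l hl => hG l (Nat.lt_succ_of_lt hl))
    set B := span ℂ (Set.range v) with hB
    have hBrank : finrank ℂ B = m := by
      rw [hB, finrank_span_eq_card hv.linearIndependent, Fintype.card_fin]
    have hW : 1 ≤ finrank ℂ (G m ⊓ Bᗮ : Submodule ℂ V) := by
      have h1 := Submodule.finrank_sup_add_finrank_inf_eq (G m) Bᗮ
      have h2 : finrank ℂ (G m ⊔ Bᗮ : Submodule ℂ V) ≤ finrank ℂ V :=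
        Submodule.finrank_le _
      have h3 := Submodule.finrank_add_finrank_orthogonal (K := B)
      have h4 := hG m (Nat.lt_succ_self m)
      omega
    have hWne : (G m ⊓ Bᗮ : Submodule ℂ V) ≠ ⊥ := by
      intro h
      rw [h, finrank_bot] at hW; omega
    obtain ⟨x, hxW, hx0⟩ := Submodule.exists_mem_ne_zero_of_ne_bot hWne
    set u := (‖x‖ : ℂ)⁻¹ • x with hu
    have hun : ‖u‖ = 1 := norm_smul_inv_norm hx0
    have huW : u ∈ (G m ⊓ Bᗮ : Submodule ℂ V) := Submodule.smul_mem _ _ hxW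
    have huB : ∀ l : Fin m, ⟪v l, u⟫ = 0 := fun l =>
      (Submodule.mem_orthogonal B u).mp huW.2 _ (Submodule.subset_span ⟨l, rfl⟩)
    refine ⟨Fin.snoc v u, ?_, ?_⟩
    · rw [orthonormal_iff_ite]
      intro a b
      refine Fin.lastCases ?_ ?_ a <;> [skip; intro a'] <;>
        refine Fin.lastCases ?_ ?_ b <;> try intro b'
      · simp [Fin.snoc_last, inner_self_eq_norm_sq_to_K, hun]
      · simp only [Fin.snoc_last, Fin.snoc_castSucc]
        rw [← inner_conj_symm, huB b']
        simp [(Fin.castSucc_lt_last b').ne']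
      · simp only [Fin.snoc_last, Fin.snoc_castSucc, huB a']
        simp [(Fin.castSucc_lt_last a').ne]
      · simp only [Fin.snoc_castSucc]
        rw [orthonormal_iff_ite.mp hv a' b']
        simp [Fin.castSucc_inj]
    · intro l
      refine Fin.lastCases ?_ ?_ l
      · simpa [Fin.snoc_last] using huW.1
      · intro l'
        simpa [Fin.snoc_castSucc] using hvG l'

lemma horn_rayleigh_bound [DecidableEq V] {r : ℕ} (b : OrthonormalBasis (Fin r) ℂ V)
    (c : Fin r → ℝ)
    (hc : Antitone c) (T : V →ₗ[ℂ] V) (hT : ∀ k, T (b k) = (c k : ℂ) • b k)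
    (t : Fin r) {x : V} (hx : x ∈ span ℂ ((Finset.Iic t).image b : Set V))
    (hxn : ‖x‖ = 1) : c t ≤ RCLike.re ⟪x, T x⟫ := by
  set a : Fin r → ℂ := fun k => ⟪b k, x⟫ with ha
  -- coefficients above t vanish
  have hvan : ∀ k : Fin r, t < k → a k = 0 := by
    intro k hk
    have hsub : ((Finset.Iic t).image b : Set V) ⊆
        (LinearMap.ker (innerSL ℂ (b k) : V →L[ℂ] ℂ).toLinearMap : Set V) := by
      intro y hy
      simp only [Finset.coe_image, Set.mem_image, Finset.mem_coe, Finset.mem_Iic] at hy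
      obtain ⟨k', hk', rfl⟩ := hy
      have hne : k ≠ k' := fun h => absurd (h ▸ hk') (not_le.mpr hk)
      have := orthonormal_iff_ite.mp b.orthonormal k k'
      simp only [SetLike.mem_coe, LinearMap.mem_ker, ContinuousLinearMap.coe_coe, innerSL_apply_apply]
      rw [this]; simp [hne]
    have := Submodule.span_le.mpr hsub hx
    simpa [ha] using this
  -- expansion of T x
  have hTx : T x = ∑ k, ((c k : ℂ) * a k) • b k := by
    conv_lhs => rw [← b.sum_repr' x]
    rw [map_sum]
    congr 1; funext k
    rw [map_smul, hT k, smul_smul, mul_comm]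
  have hconj : ∀ k, ⟪x, b k⟫ = (starRingEnd ℂ) (a k) := fun k =>
    (inner_conj_symm (𝕜 := ℂ) x (b k)).symm
  have hexp : ⟪x, T x⟫ = ∑ k, (c k : ℂ) * ((starRingEnd ℂ) (a k) * a k) := by
    rw [hTx, inner_sum]
    congr 1; funext k
    rw [inner_smul_right, hconj k]
    ring
  have hre : RCLike.re ⟪x, T x⟫ = ∑ k, c k * Complex.normSq (a k) := by
    rw [hexp, map_sum]
    congr 1; funext k
    have h : (starRingEnd ℂ) (a k) * a k = (Complex.normSq (a k) : ℂ) :=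
      (Complex.normSq_eq_conj_mul_self).symm
    rw [h, ← Complex.ofReal_mul]
    exact Complex.ofReal_re _
  -- Parseval
  have hpar : ∑ k, Complex.normSq (a k) = 1 := by
    have h1 := b.sum_inner_mul_inner x x
    have h2 : ∀ k : Fin r, ⟪x, b k⟫ * ⟪b k, x⟫ = (Complex.normSq (a k) : ℂ) := by
      intro k
      rw [hconj k]
      exact (Complex.normSq_eq_conj_mul_self).symm
    simp only [h2] at h1
    have h3 : ⟪x, x⟫ = (1 : ℂ) := by
      rw [inner_self_eq_norm_sq_to_K, hxn]; norm_num
    rw [h3] at h1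
    exact_mod_cast congrArg Complex.re h1
  -- final bound
  rw [hre]
  calc c t = ∑ k, c t * Complex.normSq (a k) := by
        rw [← Finset.mul_sum, hpar, mul_one]
    _ ≤ ∑ k, c k * Complex.normSq (a k) := by
        refine Finset.sum_le_sum fun k _ => ?_
        rcases le_or_gt k t with hk | hk
        · exact mul_le_mul_of_nonneg_right (hc hk) (Complex.normSq_nonneg _)
        · rw [hvan k hk]; simp

omit [FiniteDimensional ℂ V] in
lemma horn_trace_invariance {s : ℕ} (T : V →ₗ[ℂ] V) (v w : Fin s → V)
    (hv : Orthonormal ℂ v)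
    (hvw : ∀ l, v l = ∑ m, ⟪w m, v l⟫ • w m) :
    ∑ l, ⟪v l, T (v l)⟫ = ∑ m, ⟪w m, T (w m)⟫ := by
  set M : Matrix (Fin s) (Fin s) ℂ := fun l m => ⟪w m, v l⟫ with hM
  have hMM : M * M.conjTranspose = 1 := by
    ext l l'
    have h1 : ⟪v l', v l⟫ = ∑ m, M l m * (starRingEnd ℂ) (M l' m) := by
      conv_lhs => rw [hvw l]
      rw [inner_sum]
      congr 1; funext m
      rw [inner_smul_right, hM]
      congr 1
      exact (inner_conj_symm (𝕜 := ℂ) (v l') (w m)).symm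
    have h2 : (M * M.conjTranspose) l l' = ∑ m, M l m * (starRingEnd ℂ) (M l' m) := by
      simp [Matrix.mul_apply, Matrix.conjTranspose_apply]
    rw [h2, ← h1, orthonormal_iff_ite.mp hv l' l, Matrix.one_apply]
    simp [eq_comm]
  have hMM' : ∀ m m' : Fin s,
      ∑ l, (starRingEnd ℂ) (M l m) * M l m' = if m = m' then 1 else 0 := by
    have h := mul_eq_one_comm.mp hMM
    intro m m'
    have := congrFun (congrFun h m) m'
    simp only [Matrix.mul_apply, Matrix.conjTranspose_apply, Matrix.one_apply] at this ⊢
    exact this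
  calc ∑ l, ⟪v l, T (v l)⟫
      = ∑ l, ∑ m, ∑ m', (starRingEnd ℂ) (M l m) * M l m' * ⟪w m, T (w m')⟫ := by
        refine Finset.sum_congr rfl fun l _ => ?_
        conv_lhs => rw [hvw l, map_sum, sum_inner]
        refine Finset.sum_congr rfl fun m _ => ?_
        rw [inner_smul_left, inner_sum]
        rw [Finset.mul_sum]
        refine Finset.sum_congr rfl fun m' _ => ?_
        rw [map_smul, inner_smul_right, hM]
        ring
    _ = ∑ m, ∑ m', (∑ l, (starRingEnd ℂ) (M l m) * M l m') * ⟪w m, T (w m')⟫ := by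
        rw [Finset.sum_comm]
        refine Finset.sum_congr rfl fun m _ => ?_
        rw [Finset.sum_comm]
        refine Finset.sum_congr rfl fun m' _ => ?_
        rw [Finset.sum_mul]
    _ = ∑ m, ⟪w m, T (w m)⟫ := by
        refine Finset.sum_congr rfl fun m _ => ?_
        rw [Finset.sum_eq_single m]
        · rw [hMM' m m]; simp
        · intro m' _ hm'
          rw [hMM' m m']; simp [Ne.symm hm']
        · simp

end HornAux

theorem horn_inequalities_necessary (r s n : ℕ) (hs : 1 ≤ s) (hsr : s < r) (hn : 1 ≤ n)
    (j : Fin n → Fin s → Fin r) (hj : ∀ i, StrictMono (j i))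
    (htrans : ∀ F : Fin n → Fin s → Submodule ℂ (EuclideanSpace ℂ (Fin r)),
      (∀ i, Monotone (F i)) →
      (∀ i l, Module.finrank ℂ (F i l) = (j i l : ℕ) + 1) →
      ∃ E : Submodule ℂ (EuclideanSpace ℂ (Fin r)),
        Module.finrank ℂ E = s ∧
        ∀ i, ∀ l : Fin s, (l : ℕ) + 1 ≤ Module.finrank ℂ (E ⊓ F i l : Submodule ℂ _))
    (H : Fin n → Matrix (Fin r) (Fin r) ℂ) (hH : ∀ i, (H i).IsHermitian)
    (hsum : ∑ i, H i = 0)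
    (μ : Fin n → Fin r → ℝ) (hmono : ∀ i, Antitone (μ i))
    (hperm : ∀ i, ∃ σ : Equiv.Perm (Fin r), ∀ k, μ i k = (hH i).eigenvalues (σ k)) :
    ∑ i, ∑ l, μ i (j i l) ≤ 0 := by
  classical
  set V := EuclideanSpace ℂ (Fin r) with hV
  choose σ hσ using hperm
  -- reindexed eigenbases
  set b : ∀ i : Fin n, OrthonormalBasis (Fin r) ℂ V :=
    fun i => (hH i).eigenvectorBasis.reindex (σ i).symm with hb
  have hbk : ∀ i k, b i k = (hH i).eigenvectorBasis (σ i k) := fun i k => by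
    rw [hb, OrthonormalBasis.reindex_apply, Equiv.symm_symm]
  -- the linear maps
  set T : ∀ _ : Fin n, V →ₗ[ℂ] V := fun i => Matrix.toEuclideanLin (H i) with hTdef
  have hT : ∀ i k, T i (b i k) = ((μ i k : ℝ) : ℂ) • b i k := by
    intro i k
    have h1 := (hH i).mulVec_eigenvectorBasis (σ i k)
    have h2 : T i (b i k) =
        (WithLp.equiv 2 (Fin r → ℂ)).symm ((H i).mulVec
          (WithLp.equiv 2 (Fin r → ℂ) ((hH i).eigenvectorBasis (σ i k)))) := by
      rw [hbk]; rfl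
    have h3 : (H i).mulVec (WithLp.equiv 2 (Fin r → ℂ) ((hH i).eigenvectorBasis (σ i k)))
        = (hH i).eigenvalues (σ i k) •
          (WithLp.equiv 2 (Fin r → ℂ) ((hH i).eigenvectorBasis (σ i k))) := h1
    rw [h2, h3, WithLp.equiv_symm_apply, WithLp.equiv_apply, WithLp.toLp_smul, WithLp.toLp_ofLp, hbk i k, hσ i k,
      RCLike.real_smul_eq_coe_smul (K := ℂ)]
    norm_num
  have hTsum : ∑ i, T i = 0 := by
    rw [hTdef, ← map_sum Matrix.toEuclideanLin H Finset.univ, hsum, map_zero]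
  -- the flags
  set F : Fin n → Fin s → Submodule ℂ V :=
    fun i l => span ℂ ((Finset.Iic (j i l)).image (b i) : Set V) with hF
  have hFmono : ∀ i, Monotone (F i) := by
    intro i l l' hll'
    apply span_mono
    exact_mod_cast Finset.coe_subset.mpr
      (Finset.image_subset_image (Finset.Iic_subset_Iic.mpr ((hj i).monotone hll')))
  have hFrank : ∀ i l, finrank ℂ (F i l) = (j i l : ℕ) + 1 := by
    intro i l
    have hinj : Function.Injective (b i) := (b i).toBasis.injective
    have hsub : (((Finset.Iic (j i l)).image (b i) : Finset V) : Set V) ⊆ Set.range (b i) := by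
      intro y hy
      simp only [Finset.coe_image, Set.mem_image] at hy
      obtain ⟨k, _, rfl⟩ := hy
      exact ⟨k, rfl⟩
    have hli := ((b i).orthonormal.linearIndependent.linearIndepOn_id).mono hsub
    rw [hF, finrank_span_finset_eq_card hli, Finset.card_image_of_injective _ hinj,
      Fin.card_Iic]
  obtain ⟨E, hE, hEF⟩ := htrans F hFmono hFrank
  -- orthonormal basis of E
  set wE : OrthonormalBasis (Fin s) ℂ E := (stdOrthonormalBasis ℂ E).reindex (finCongr hE)
    with hwE
  set w : Fin s → V := fun m => ((wE m : E) : V) with hw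
  -- the orthonormal families threading the flags
  have hvex : ∀ i, ∃ v : Fin s → V, Orthonormal ℂ v ∧
      ∀ l : Fin s, v l ∈ (E ⊓ F i l : Submodule ℂ V) := by
    intro i
    have hc : ∀ (l : ℕ) (hl : l < s),
        (if h : l < s then (⟨l, h⟩ : Fin s) else ⟨0, hs⟩) = ⟨l, hl⟩ :=
      fun l hl => dif_pos hl
    obtain ⟨v, hvon, hmem⟩ := horn_exists_orthonormal_chain
      (fun l => (E ⊓ F i (if h : l < s then (⟨l, h⟩ : Fin s) else ⟨0, hs⟩) : Submodule ℂ V)) s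
      (fun l hl => by
        show l + 1 ≤ finrank ℂ
          ↥(E ⊓ F i (if h : l < s then (⟨l, h⟩ : Fin s) else ⟨0, hs⟩) : Submodule ℂ V)
        rw [hc l hl]
        exact hEF i ⟨l, hl⟩)
    refine ⟨v, hvon, fun l => ?_⟩
    have hml := hmem l
    simp only [hc (l : ℕ) l.isLt, Fin.eta] at hml
    exact hml
  choose v hvon hvmem using hvex
  -- expansion of v's in the basis of E
  have hvw : ∀ i l, v i l = ∑ m, (inner ℂ (w m) (v i l) : ℂ) • w m := by
    intro i l
    have hmem := (hvmem i l).1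
    have hrep := wE.sum_repr' (⟨v i l, hmem⟩ : E)
    have hco := congrArg (Submodule.subtype E) hrep
    simp only [map_sum, map_smul, Submodule.coe_subtype] at hco
    refine hco.symm.trans (Finset.sum_congr rfl fun m _ => ?_)
    rw [Submodule.coe_inner]
  -- Rayleigh bound for each i, l
  have key : ∀ i, ∑ l, μ i (j i l) ≤ ∑ m, RCLike.re (inner ℂ (w m) (T i (w m)) : ℂ) := by
    intro i
    have h1 : ∀ l : Fin s, μ i (j i l) ≤ RCLike.re (inner ℂ (v i l) (T i (v i l)) : ℂ) := by
      intro l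
      exact horn_rayleigh_bound (b i) (μ i) (hmono i) (T i) (hT i) (j i l)
        (hvmem i l).2 ((hvon i).1 l)
    calc ∑ l, μ i (j i l) ≤ ∑ l, RCLike.re (inner ℂ (v i l) (T i (v i l)) : ℂ) :=
          Finset.sum_le_sum fun l _ => h1 l
      _ = ∑ m, RCLike.re (inner ℂ (w m) (T i (w m)) : ℂ) := by
          rw [← map_sum, ← map_sum,
            horn_trace_invariance (T i) (v i) w (hvon i) (hvw i)]
  -- sum over i and conclude
  have hzero : ∑ i, ∑ m, RCLike.re (inner ℂ (w m) (T i (w m)) : ℂ) = 0 := by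
    rw [Finset.sum_comm]
    have hm : ∀ m : Fin s, ∑ i, RCLike.re (inner ℂ (w m) (T i (w m)) : ℂ) = 0 := by
      intro m
      rw [← map_sum, ← inner_sum]
      have : ∑ i, T i (w m) = 0 := by
        rw [← LinearMap.sum_apply, hTsum, LinearMap.zero_apply]
      rw [this, inner_zero_right]
      simp
    calc ∑ m : Fin s, ∑ i, RCLike.re (inner ℂ (w m) (T i (w m)) : ℂ)
        = ∑ _m : Fin s, (0 : ℝ) := Finset.sum_congr rfl fun m _ => hm m
      _ = 0 := by simp
  calc ∑ i, ∑ l, μ i (j i l)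
      ≤ ∑ i, ∑ m, RCLike.re (inner ℂ (w m) (T i (w m)) : ℂ) :=
        Finset.sum_le_sum fun i _ => key i
    _ = 0 := hzero
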